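/- For any minor-closed class Π of graphs and any k ∈ ℕ, the class Π_k of graphs from which a graph in Π can be obtained by at most k vertex splits is also minor closed. -/

import Mathlib

/-- `H` is a minor of `G`, expressed via branch sets. -/
def GraphMinor {W V : Type} (H : SimpleGraph W) (G : SimpleGraph V) : Prop :=
  ∃ φ : W → Set V,
    (∀ w, (φ w).Nonempty) ∧
    (∀ w, (G.induce (φ w)).Connected) ∧
    (∀ w w', w ≠ w' → Disjoint (φ w) (φ w')) ∧
    (∀ w w', H.Adj w w' → ∃ a ∈ φ w, ∃ b ∈ φ w', G.Adj a b)

/-- The result of splitting vertex `v` of `G` into two copies with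
neighborhoods `N1` and `N2`. -/
def doSplit {V : Type} (G : SimpleGraph V) (v : V) (N1 N2 : Set V) :
    SimpleGraph ({u : V // u ≠ v} ⊕ Fin 2) :=
  SimpleGraph.fromRel fun a b =>
    match a, b with
    | Sum.inl u, Sum.inl w => G.Adj u.1 w.1
    | Sum.inl u, Sum.inr i => (i = 0 ∧ u.1 ∈ N1) ∨ (i = 1 ∧ u.1 ∈ N2)
    | _, _ => False

/-- `SplitsTo G k H` holds when `H` can be obtained from `G` by exactly `k`
vertex splits (up to isomorphism at every step). -/
inductive SplitsTo : SimpleGraph ℕ → ℕ → SimpleGraph ℕ → Prop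
  | refl (G : SimpleGraph ℕ) : SplitsTo G 0 G
  | step {G H K : SimpleGraph ℕ} {k : ℕ} (v : ℕ) (N1 N2 : Set ℕ)
      (hcov : N1 ∪ N2 = G.neighborSet v)
      (hiso : Nonempty (H ≃g doSplit G v N1 N2))
      (htail : SplitsTo H k K) : SplitsTo G (k + 1) K

/-- The class `Π_k` of graphs from which a member of `Cls` can be obtained by
at most `k` vertex splits. -/
def PiK (Cls : Set (SimpleGraph ℕ)) (k : ℕ) : Set (SimpleGraph ℕ) :=
  {G | ∃ j ≤ k, ∃ H ∈ Cls, SplitsTo G j H}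

def MinorClosed (P : Set (SimpleGraph ℕ)) : Prop :=
  ∀ G ∈ P, ∀ H : SimpleGraph ℕ, GraphMinor H G → H ∈ P

section ReachIn

variable {X Y : Type} {Γ : SimpleGraph X} {Γ' : SimpleGraph Y} {s t : Set X} {a b c : X}

/-- Reachability inside a vertex subset. -/
def ReachIn (Γ : SimpleGraph X) (s : Set X) (a b : X) : Prop :=
  a ∈ s ∧ Relation.ReflTransGen (fun x y => Γ.Adj x y ∧ x ∈ s ∧ y ∈ s) a b

lemma ReachIn.refl (ha : a ∈ s) : ReachIn Γ s a a := ⟨ha, Relation.ReflTransGen.refl⟩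

lemma ReachIn.mem_left (h : ReachIn Γ s a b) : a ∈ s := h.1

lemma ReachIn.mem_right (h : ReachIn Γ s a b) : b ∈ s := by
  obtain ⟨ha, h⟩ := h
  induction h with
  | refl => exact ha
  | tail _ step _ => exact step.2.2

lemma ReachIn.trans (h1 : ReachIn Γ s a b) (h2 : ReachIn Γ s b c) : ReachIn Γ s a c :=
  ⟨h1.1, h1.2.trans h2.2⟩

lemma ReachIn.symm (h : ReachIn Γ s a b) : ReachIn Γ s b a :=
  ⟨h.mem_right,
    (haveI : Std.Symm (fun x y => Γ.Adj x y ∧ x ∈ s ∧ y ∈ s) :=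
      ⟨fun _ _ hxy => ⟨hxy.1.symm, hxy.2.2, hxy.2.1⟩⟩
    Relation.ReflTransGen.symmetric.symm _ _ h.2)⟩

lemma ReachIn.single (h : Γ.Adj a b) (ha : a ∈ s) (hb : b ∈ s) : ReachIn Γ s a b :=
  ⟨ha, Relation.ReflTransGen.single ⟨h, ha, hb⟩⟩

lemma ReachIn.head (h : Γ.Adj a b) (ha : a ∈ s) (h2 : ReachIn Γ s b c) : ReachIn Γ s a c :=
  (ReachIn.single h ha h2.1).trans h2

lemma ReachIn.tail (h : ReachIn Γ s a b) (hadj : Γ.Adj b c) (hc : c ∈ s) : ReachIn Γ s a c :=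
  ⟨h.1, h.2.tail ⟨hadj, h.mem_right, hc⟩⟩

lemma ReachIn.reachable (h : ReachIn Γ s a b) (ha : a ∈ s) (hb : b ∈ s) :
    (Γ.induce s).Reachable ⟨a, ha⟩ ⟨b, hb⟩ := by
  obtain ⟨-, h⟩ := h
  have aux : ∀ b, Relation.ReflTransGen (fun x y => Γ.Adj x y ∧ x ∈ s ∧ y ∈ s) a b →
      ∀ hb : b ∈ s, (Γ.induce s).Reachable ⟨a, ha⟩ ⟨b, hb⟩ := by
    intro b h
    induction h with
    | refl => intro _; exact SimpleGraph.Reachable.refl _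
    | @tail c d h step ih =>
        intro hd
        exact (ih step.2.1).trans
          (SimpleGraph.Adj.reachable (by simpa using step.1 :
            (Γ.induce s).Adj ⟨c, step.2.1⟩ ⟨d, hd⟩))
  exact aux b h hb

lemma reachIn_of_walk : ∀ {x y : s}, (Γ.induce s).Walk x y → ReachIn Γ s x.1 y.1 := by
  intro x y p
  induction p with
  | nil => exact ReachIn.refl (Subtype.mem _)
  | @cons u w _ h _ ih => exact ReachIn.head (by simpa using h) (Subtype.mem _) ih

lemma induce_connected_of_reachIn (ha : a ∈ s)
    (h : ∀ x ∈ s, ReachIn Γ s x a) : (Γ.induce s).Connected := by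
  rw [SimpleGraph.connected_iff_exists_forall_reachable]
  exact ⟨⟨a, ha⟩, fun w => ((h w.1 w.2).symm.reachable ha w.2)⟩

lemma reachIn_of_connected (h : (Γ.induce s).Connected) (ha : a ∈ s) (hb : b ∈ s) :
    ReachIn Γ s a b := by
  obtain ⟨p⟩ := h.preconnected ⟨a, ha⟩ ⟨b, hb⟩
  exact reachIn_of_walk p

lemma ReachIn.map (e : Γ ≃g Γ') (h : ReachIn Γ s a b) : ReachIn Γ' (e '' s) (e a) (e b) := by
  obtain ⟨ha, h⟩ := h
  refine ⟨⟨a, ha, rfl⟩, ?_⟩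
  induction h with
  | refl => exact Relation.ReflTransGen.refl
  | tail _ step ih =>
      exact ih.tail ⟨e.map_rel_iff.mpr step.1, ⟨_, step.2.1, rfl⟩, ⟨_, step.2.2, rfl⟩⟩

lemma reachIn_strengthen (h : ReachIn Γ s a b) : ReachIn Γ {y | ReachIn Γ s y b} a b := by
  have aux : ∀ x, Relation.ReflTransGen (fun p q => Γ.Adj p q ∧ p ∈ s ∧ q ∈ s) x b →
      x ∈ s → ReachIn Γ {y | ReachIn Γ s y b} x b := by
    intro x h
    induction h using Relation.ReflTransGen.head_induction_on with
    | refl => intro hb; exact ReachIn.refl ⟨hb, Relation.ReflTransGen.refl⟩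
    | @head p c step rest ih =>
        intro hp
        exact ReachIn.head step.1 ⟨hp, Relation.ReflTransGen.head step rest⟩ (ih step.2.2)
  exact aux a h.2 h.1

end ReachIn

section MinorCongr

lemma GraphMinor.congr_left {W W' V : Type} {H : SimpleGraph W} {H' : SimpleGraph W'}
    {G : SimpleGraph V} (e : H ≃g H') (h : GraphMinor H G) : GraphMinor H' G := by
  obtain ⟨φ, h1, h2, h3, h4⟩ := h
  refine ⟨fun w => φ (e.symm w), fun w => h1 _, fun w => h2 _, ?_, ?_⟩
  · intro w w' hww'
    exact h3 _ _ (fun hc => hww' (e.symm.toEquiv.injective hc))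
  · intro w w' hadj
    exact h4 _ _ (e.symm.map_rel_iff.mpr hadj)

lemma GraphMinor.congr_right {W V V' : Type} {H : SimpleGraph W} {G : SimpleGraph V}
    {G' : SimpleGraph V'} (e : G ≃g G') (h : GraphMinor H G) : GraphMinor H G' := by
  obtain ⟨φ, h1, h2, h3, h4⟩ := h
  refine ⟨fun w => e '' φ w, fun w => (h1 w).image e, ?_, ?_, ?_⟩
  · intro w
    obtain ⟨a, ha⟩ := h1 w
    refine induce_connected_of_reachIn (a := e a) ?_ ?_
    · exact ⟨a, ha, rfl⟩
    rintro x ⟨u, hu, rfl⟩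
    exact (reachIn_of_connected (h2 w) hu ha).map e
  · intro w w' hww'
    exact (Set.disjoint_image_iff e.toEquiv.injective).mpr (h3 _ _ hww')
  · intro w w' hadj
    obtain ⟨a, ha, b, hb, hab⟩ := h4 _ _ hadj
    exact ⟨e a, ⟨a, ha, rfl⟩, e b, ⟨b, hb, rfl⟩, e.map_rel_iff.mpr hab⟩

end MinorCongr

section SplitAdj

variable {V : Type} {G : SimpleGraph V} {v : V} {N1 N2 : Set V}

lemma doSplit_adj_inl_inl {a b : {u : V // u ≠ v}} :
    (doSplit G v N1 N2).Adj (Sum.inl a) (Sum.inl b) ↔ G.Adj a.1 b.1 := by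
  have h : (doSplit G v N1 N2).Adj (Sum.inl a) (Sum.inl b) ↔
      ((Sum.inl a : {u : V // u ≠ v} ⊕ Fin 2) ≠ Sum.inl b ∧
        (G.Adj a.1 b.1 ∨ G.Adj b.1 a.1)) := SimpleGraph.fromRel_adj _ _ _
  rw [h]
  constructor
  · rintro ⟨-, h | h⟩
    · exact h
    · exact h.symm
  · intro hab
    refine ⟨?_, Or.inl hab⟩
    intro hc
    rw [Sum.inl.injEq] at hc
    exact G.loopless.irrefl _ (hc ▸ hab)

lemma doSplit_adj_inl_inr {a : {u : V // u ≠ v}} {i : Fin 2} :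
    (doSplit G v N1 N2).Adj (Sum.inl a) (Sum.inr i) ↔
      (i = 0 ∧ a.1 ∈ N1) ∨ (i = 1 ∧ a.1 ∈ N2) := by
  have h : (doSplit G v N1 N2).Adj (Sum.inl a) (Sum.inr i) ↔
      ((Sum.inl a : {u : V // u ≠ v} ⊕ Fin 2) ≠ Sum.inr i ∧
        (((i = 0 ∧ a.1 ∈ N1) ∨ (i = 1 ∧ a.1 ∈ N2)) ∨ False)) := SimpleGraph.fromRel_adj _ _ _
  rw [h]
  simp

lemma doSplit_not_adj_inr {i j : Fin 2} :
    ¬ (doSplit G v N1 N2).Adj (Sum.inr i) (Sum.inr j) := by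
  intro h
  have h' : ((Sum.inr i : {u : V // u ≠ v} ⊕ Fin 2) ≠ Sum.inr j ∧ (False ∨ False)) :=
    (SimpleGraph.fromRel_adj _ _ _).mp h
  exact h'.2.elim id id

end SplitAdj

section LiftSet

variable {V : Type} {G : SimpleGraph V} {v : V} {N1 N2 : Set V}

/-- Lift a set of vertices avoiding `v` into the split graph's vertex type. -/
def liftSet (v : V) (A : Set V) : Set ({u : V // u ≠ v} ⊕ Fin 2) :=
  {x | ∃ u : {u : V // u ≠ v}, u.1 ∈ A ∧ x = Sum.inl u}

lemma reachIn_lift {A : Set V} (hA : v ∉ A) {a b : V}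
    (h : ReachIn G A a b) (ha : a ≠ v) (hb : b ≠ v) :
    ReachIn (doSplit G v N1 N2) (liftSet v A) (Sum.inl ⟨a, ha⟩) (Sum.inl ⟨b, hb⟩) := by
  obtain ⟨haA, h⟩ := h
  have aux : ∀ b, Relation.ReflTransGen (fun x y => G.Adj x y ∧ x ∈ A ∧ y ∈ A) a b →
      ∀ hb : b ≠ v, ReachIn (doSplit G v N1 N2) (liftSet v A)
        (Sum.inl ⟨a, ha⟩) (Sum.inl ⟨b, hb⟩) := by
    intro b h
    induction h with
    | refl => intro _; exact ReachIn.refl ⟨⟨a, ha⟩, haA, rfl⟩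
    | @tail c d h step ih =>
        intro hd
        have hc : c ≠ v := fun h' => hA (h' ▸ step.2.1)
        exact (ih hc).tail (doSplit_adj_inl_inl.mpr step.1) ⟨⟨d, hd⟩, step.2.2, rfl⟩
  exact aux b h hb

end LiftSet

section Key

/-- The key combinatorial lemma: a minor relationship survives a vertex split,
possibly after splitting one vertex of the minor. -/
lemma key {V W : Type} (G : SimpleGraph V) (H : SimpleGraph W)
    (v : V) (N1 N2 : Set V) (hcov : N1 ∪ N2 = G.neighborSet v)
    (hm : GraphMinor H G) :
    GraphMinor H (doSplit G v N1 N2) ∨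
    ∃ (w0 : W) (M1 M2 : Set W), M1 ∪ M2 = H.neighborSet w0 ∧
      GraphMinor (doSplit H w0 M1 M2) (doSplit G v N1 N2) := by
  classical
  obtain ⟨φ, hne, hconn, hdisj, hadj⟩ := hm
  set G' := doSplit G v N1 N2 with hG'def
  have hNbr : ∀ a, G.Adj a v → a ∈ N1 ∪ N2 := by
    intro a h
    rw [hcov]
    exact h.symm
  by_cases hv : ∃ w0, v ∈ φ w0
  case neg =>
    -- Case A : `v` belongs to no branch set, so nothing changes.
    left
    have hvn : ∀ w, v ∉ φ w := fun w h => hv ⟨w, h⟩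
    refine ⟨fun w => liftSet v (φ w), ?_, ?_, ?_, ?_⟩
    · intro w
      obtain ⟨a, ha⟩ := hne w
      exact ⟨Sum.inl ⟨a, fun h => hvn w (h ▸ ha)⟩, ⟨a, fun h => hvn w (h ▸ ha)⟩, ha, rfl⟩
    · intro w
      obtain ⟨a, ha⟩ := hne w
      have hav : a ≠ v := fun h => hvn w (h ▸ ha)
      refine induce_connected_of_reachIn (a := Sum.inl ⟨a, hav⟩) ?_ ?_
      · exact ⟨⟨a, hav⟩, ha, rfl⟩
      rintro x ⟨⟨u, huv⟩, hu, rfl⟩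
      exact reachIn_lift (hvn w) (reachIn_of_connected (hconn w) hu ha) huv hav
    · intro w w' hww'
      rw [Set.disjoint_left]
      rintro x ⟨u, hu, rfl⟩ ⟨u', hu', hx⟩
      obtain rfl := Sum.inl.inj hx
      exact Set.disjoint_left.mp (hdisj w w' hww') hu hu'
    · intro w w' h
      obtain ⟨a, ha, b, hb, hab⟩ := hadj w w' h
      exact ⟨Sum.inl ⟨a, fun h' => hvn w (h' ▸ ha)⟩, ⟨_, ha, rfl⟩,
        Sum.inl ⟨b, fun h' => hvn w' (h' ▸ hb)⟩, ⟨_, hb, rfl⟩, doSplit_adj_inl_inl.mpr hab⟩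
  case pos =>
  obtain ⟨w0, hvw0⟩ := hv
  have hvnot : ∀ w, w ≠ w0 → v ∉ φ w :=
    fun w hw h => Set.disjoint_left.mp (hdisj w w0 hw) h hvw0
  set S : Set ({u : V // u ≠ v} ⊕ Fin 2) :=
    liftSet v (φ w0) ∪ {Sum.inr 0, Sum.inr 1} with hSdef
  have hi0S : (Sum.inr 0 : {u : V // u ≠ v} ⊕ Fin 2) ∈ S := Or.inr (Or.inl rfl)
  have hi1S : (Sum.inr 1 : {u : V // u ≠ v} ⊕ Fin 2) ∈ S := Or.inr (Or.inr rfl)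
  -- every vertex of `S` reaches one of the two split vertices
  have reach_to : ∀ x ∈ S,
      ReachIn G' S x (Sum.inr 0) ∨ ReachIn G' S x (Sum.inr 1) := by
    have main : ∀ u, Relation.ReflTransGen
          (fun x y => G.Adj x y ∧ x ∈ φ w0 ∧ y ∈ φ w0) u v →
        ∀ (huv : u ≠ v), u ∈ φ w0 →
        ReachIn G' S (Sum.inl ⟨u, huv⟩) (Sum.inr 0) ∨
          ReachIn G' S (Sum.inl ⟨u, huv⟩) (Sum.inr 1) := by
      intro u hr
      induction hr using Relation.ReflTransGen.head_induction_on with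
      | refl => intro h _; exact absurd rfl h
      | @head a c step hrest ih =>
          intro huv hu
          have haS : (Sum.inl ⟨a, huv⟩ : {u : V // u ≠ v} ⊕ Fin 2) ∈ S :=
            Or.inl ⟨⟨a, huv⟩, hu, rfl⟩
          by_cases hcv : c = v
          · subst hcv
            rcases hNbr a step.1 with h1 | h2
            · exact Or.inl (ReachIn.single (doSplit_adj_inl_inr.mpr (Or.inl ⟨rfl, h1⟩))
                haS hi0S)
            · exact Or.inr (ReachIn.single (doSplit_adj_inl_inr.mpr (Or.inr ⟨rfl, h2⟩))
                haS hi1S)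
          · rcases ih hcv step.2.2 with h | h
            · exact Or.inl (ReachIn.head (doSplit_adj_inl_inl.mpr step.1) haS h)
            · exact Or.inr (ReachIn.head (doSplit_adj_inl_inl.mpr step.1) haS h)
    rintro x (⟨⟨u, huv⟩, hu, rfl⟩ | hx)
    · exact main u (reachIn_of_connected (hconn w0) hu hvw0).2 huv hu
    · rcases hx with rfl | hx
      · exact Or.inl (ReachIn.refl hi0S)
      · rw [Set.mem_singleton_iff] at hx
        subst hx
        exact Or.inr (ReachIn.refl hi1S)
  have hSdisj : ∀ w, w ≠ w0 → Disjoint S (liftSet v (φ w)) := by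
    intro w hw
    rw [Set.disjoint_left]
    rintro x (⟨u, hu, rfl⟩ | hx) ⟨u', hu', hx'⟩
    · obtain rfl := Sum.inl.inj hx'
      exact Set.disjoint_left.mp (hdisj w0 w (Ne.symm hw)) hu hu'
    · rcases hx with rfl | hx
      · exact nomatch hx'
      · rw [Set.mem_singleton_iff] at hx
        subst hx
        exact nomatch hx'
  -- disjointness of lifted branch sets
  have hliftdisj : ∀ w w', w ≠ w' → Disjoint (liftSet v (φ w)) (liftSet v (φ w')) := by
    intro w w' hww'
    rw [Set.disjoint_left]
    rintro x ⟨u, hu, rfl⟩ ⟨u', hu', hx⟩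
    obtain rfl := Sum.inl.inj hx
    exact Set.disjoint_left.mp (hdisj w w' hww') hu hu'
  have hliftne : ∀ w, w ≠ w0 → (liftSet v (φ w)).Nonempty := by
    intro w hw
    obtain ⟨a, ha⟩ := hne w
    exact ⟨Sum.inl ⟨a, fun h => hvnot w hw (h ▸ ha)⟩, ⟨_, ha, rfl⟩⟩
  have hliftconn : ∀ w, w ≠ w0 → ((G'.induce (liftSet v (φ w))).Connected) := by
    intro w hw
    obtain ⟨a, ha⟩ := hne w
    have hav : a ≠ v := fun h => hvnot w hw (h ▸ ha)
    refine induce_connected_of_reachIn (a := Sum.inl ⟨a, hav⟩) ?_ ?_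
    · exact ⟨⟨a, hav⟩, ha, rfl⟩
    rintro x ⟨⟨u, huv⟩, hu, rfl⟩
    exact reachIn_lift (hvnot w hw) (reachIn_of_connected (hconn w) hu ha) huv hav
  by_cases hjoin : ReachIn G' S (Sum.inr 1) (Sum.inr 0)
  · -- Case B1 : the two split vertices stay in one connected piece.
    left
    have hSreach : ∀ x ∈ S, ReachIn G' S x (Sum.inr 0) := by
      intro x hx
      rcases reach_to x hx with h | h
      · exact h
      · exact h.trans hjoin
    refine ⟨fun w => if w = w0 then S else liftSet v (φ w), ?_, ?_, ?_, ?_⟩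
    · intro w
      show (if w = w0 then S else liftSet v (φ w)).Nonempty
      by_cases hw : w = w0
      · rw [if_pos hw]; exact ⟨_, hi0S⟩
      · rw [if_neg hw]; exact hliftne w hw
    · intro w
      show (G'.induce (if w = w0 then S else liftSet v (φ w))).Connected
      by_cases hw : w = w0
      · rw [if_pos hw]
        exact induce_connected_of_reachIn hi0S hSreach
      · rw [if_neg hw]; exact hliftconn w hw
    · intro w w' hww'
      show Disjoint (if w = w0 then S else liftSet v (φ w))
        (if w' = w0 then S else liftSet v (φ w'))
      by_cases hw : w = w0
      · subst hw
        rw [if_pos rfl, if_neg (Ne.symm hww')]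
        exact hSdisj w' (Ne.symm hww')
      · rw [if_neg hw]
        by_cases hw' : w' = w0
        · subst hw'; rw [if_pos rfl]
          exact (hSdisj w hw).symm
        · rw [if_neg hw']
          exact hliftdisj w w' hww'
    · intro w w' h
      show ∃ a ∈ (if w = w0 then S else liftSet v (φ w)),
        ∃ b ∈ (if w' = w0 then S else liftSet v (φ w')), G'.Adj a b
      obtain ⟨a, ha, b, hb, hab⟩ := hadj w w' h
      by_cases hw : w = w0
      · subst hw
        have hw' : w' ≠ w := Ne.symm h.ne
        rw [if_pos rfl, if_neg hw']
        have hbv : b ≠ v := fun h' => hvnot w' hw' (h' ▸ hb)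
        by_cases hav : a = v
        · subst hav
          rcases hNbr b hab.symm with h1 | h2
          · exact ⟨Sum.inr 0, hi0S, Sum.inl ⟨b, hbv⟩, ⟨_, hb, rfl⟩,
              (doSplit_adj_inl_inr.mpr (Or.inl ⟨rfl, h1⟩)).symm⟩
          · exact ⟨Sum.inr 1, hi1S, Sum.inl ⟨b, hbv⟩, ⟨_, hb, rfl⟩,
              (doSplit_adj_inl_inr.mpr (Or.inr ⟨rfl, h2⟩)).symm⟩
        · exact ⟨Sum.inl ⟨a, hav⟩, Or.inl ⟨_, ha, rfl⟩, Sum.inl ⟨b, hbv⟩, ⟨_, hb, rfl⟩,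
            doSplit_adj_inl_inl.mpr hab⟩
      · rw [if_neg hw]
        have hav : a ≠ v := fun h' => hvnot w hw (h' ▸ ha)
        by_cases hw' : w' = w0
        · subst hw'
          rw [if_pos rfl]
          by_cases hbv : b = v
          · subst hbv
            rcases hNbr a hab with h1 | h2
            · exact ⟨Sum.inl ⟨a, hav⟩, ⟨_, ha, rfl⟩, Sum.inr 0, hi0S,
                doSplit_adj_inl_inr.mpr (Or.inl ⟨rfl, h1⟩)⟩
            · exact ⟨Sum.inl ⟨a, hav⟩, ⟨_, ha, rfl⟩, Sum.inr 1, hi1S,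
                doSplit_adj_inl_inr.mpr (Or.inr ⟨rfl, h2⟩)⟩
          · exact ⟨Sum.inl ⟨a, hav⟩, ⟨_, ha, rfl⟩, Sum.inl ⟨b, hbv⟩, Or.inl ⟨_, hb, rfl⟩,
              doSplit_adj_inl_inl.mpr hab⟩
        · rw [if_neg hw']
          have hbv : b ≠ v := fun h' => hvnot w' hw' (h' ▸ hb)
          exact ⟨Sum.inl ⟨a, hav⟩, ⟨_, ha, rfl⟩, Sum.inl ⟨b, hbv⟩, ⟨_, hb, rfl⟩,
            doSplit_adj_inl_inl.mpr hab⟩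
  · -- Case B2 : the branch set of `w0` falls into two pieces; we split `w0`.
    right
    set C0 : Set ({u : V // u ≠ v} ⊕ Fin 2) := {x | ReachIn G' S x (Sum.inr 0)} with hC0def
    set C1 : Set ({u : V // u ≠ v} ⊕ Fin 2) := {x | ReachIn G' S x (Sum.inr 1)} with hC1def
    have hC0S : C0 ⊆ S := fun x h => h.mem_left
    have hC1S : C1 ⊆ S := fun x h => h.mem_left
    have hi0C0 : (Sum.inr 0 : {u : V // u ≠ v} ⊕ Fin 2) ∈ C0 := ReachIn.refl hi0S
    have hi1C1 : (Sum.inr 1 : {u : V // u ≠ v} ⊕ Fin 2) ∈ C1 := ReachIn.refl hi1S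
    have hC01 : Disjoint C0 C1 := by
      rw [Set.disjoint_left]
      intro x h0 h1
      exact hjoin (h1.symm.trans h0)
    have hcover : ∀ x ∈ S, x ∈ C0 ∨ x ∈ C1 := reach_to
    -- the witness fact
    have hwit : ∀ w, H.Adj w0 w → ∃ x ∈ liftSet v (φ w), ∃ y, (y ∈ C0 ∨ y ∈ C1) ∧ G'.Adj x y := by
      intro w h
      have hw : w ≠ w0 := Ne.symm h.ne
      obtain ⟨a, ha, b, hb, hab⟩ := hadj w0 w h
      have hbv : b ≠ v := fun h' => hvnot w hw (h' ▸ hb)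
      by_cases hav : a = v
      · subst hav
        rcases hNbr b hab.symm with h1 | h2
        · exact ⟨Sum.inl ⟨b, hbv⟩, ⟨_, hb, rfl⟩, Sum.inr 0, Or.inl hi0C0,
            doSplit_adj_inl_inr.mpr (Or.inl ⟨rfl, h1⟩)⟩
        · exact ⟨Sum.inl ⟨b, hbv⟩, ⟨_, hb, rfl⟩, Sum.inr 1, Or.inr hi1C1,
            doSplit_adj_inl_inr.mpr (Or.inr ⟨rfl, h2⟩)⟩
      · have haS : (Sum.inl ⟨a, hav⟩ : {u : V // u ≠ v} ⊕ Fin 2) ∈ S :=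
          Or.inl ⟨⟨a, hav⟩, ha, rfl⟩
        exact ⟨Sum.inl ⟨b, hbv⟩, ⟨_, hb, rfl⟩, Sum.inl ⟨a, hav⟩, hcover _ haS,
          doSplit_adj_inl_inl.mpr hab.symm⟩
    set M1 : Set W := {w | H.Adj w0 w ∧ ∃ x ∈ liftSet v (φ w), ∃ y ∈ C0, G'.Adj x y} with hM1def
    set M2 : Set W := {w | H.Adj w0 w ∧ w ∉ M1} with hM2def
    have hMcov : M1 ∪ M2 = H.neighborSet w0 := by
      ext w
      constructor
      · rintro (h | h)
        · exact h.1
        · exact h.1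
      · intro h
        by_cases hw : w ∈ M1
        · exact Or.inl hw
        · exact Or.inr ⟨h, hw⟩
    have hM2wit : ∀ w ∈ M2, ∃ x ∈ liftSet v (φ w), ∃ y ∈ C1, G'.Adj x y := by
      rintro w ⟨h, hnm⟩
      obtain ⟨x, hx, y, hy | hy, hxy⟩ := hwit w h
      · exact absurd ⟨h, x, hx, y, hy, hxy⟩ hnm
      · exact ⟨x, hx, y, hy, hxy⟩
    refine ⟨w0, M1, M2, hMcov, ?_⟩
    have hC0conn : (G'.induce C0).Connected := by
      apply induce_connected_of_reachIn hi0C0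
      intro x hx
      exact reachIn_strengthen hx
    have hC1conn : (G'.induce C1).Connected := by
      apply induce_connected_of_reachIn hi1C1
      intro x hx
      exact reachIn_strengthen hx
    have e0 : ∀ j : Fin 2, j = 0 ∨ j = 1 := by decide
    refine ⟨Sum.elim (fun u => liftSet v (φ u.1)) (fun i => if i = 0 then C0 else C1),
      ?_, ?_, ?_, ?_⟩
    · rintro (u | i)
      · exact hliftne u.1 u.2
      · show (if i = 0 then C0 else C1).Nonempty
        rcases e0 i with rfl | rfl
        · rw [if_pos rfl]; exact ⟨_, hi0C0⟩
        · rw [if_neg (by decide : ¬(1 : Fin 2) = 0)]; exact ⟨_, hi1C1⟩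
    · rintro (u | i)
      · exact hliftconn u.1 u.2
      · show (G'.induce (if i = 0 then C0 else C1)).Connected
        rcases e0 i with rfl | rfl
        · rw [if_pos rfl]; exact hC0conn
        · rw [if_neg (by decide : ¬(1 : Fin 2) = 0)]; exact hC1conn
    · rintro (u | i) (u' | i') hne'
      · have : u.1 ≠ u'.1 := by
          intro h
          exact hne' (by rw [Subtype.ext h])
        exact hliftdisj u.1 u'.1 this
      · have h1 : Disjoint (liftSet v (φ u.1)) S := (hSdisj u.1 u.2).symm
        simp only [Sum.elim_inl, Sum.elim_inr]
        split
        · exact h1.mono_right hC0S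
        · exact h1.mono_right hC1S
      · have h1 : Disjoint S (liftSet v (φ u'.1)) := hSdisj u'.1 u'.2
        simp only [Sum.elim_inl, Sum.elim_inr]
        split
        · exact (h1.symm.mono_right hC0S).symm
        · exact (h1.symm.mono_right hC1S).symm
      · have hij : i ≠ i' := by
          intro h
          exact hne' (by rw [h])
        have e0 : ∀ j : Fin 2, j = 0 ∨ j = 1 := by decide
        show Disjoint (if i = 0 then C0 else C1) (if i' = 0 then C0 else C1)
        rcases e0 i with rfl | rfl <;> rcases e0 i' with rfl | rfl
        · exact absurd rfl hij
        · rw [if_pos rfl, if_neg (by decide : ¬(1 : Fin 2) = 0)]; exact hC01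
        · rw [if_neg (by decide : ¬(1 : Fin 2) = 0), if_pos rfl]; exact hC01.symm
        · exact absurd rfl hij
    · have main_inl_inr : ∀ (u : {w : W // w ≠ w0}) (i : Fin 2),
          (doSplit H w0 M1 M2).Adj (Sum.inl u) (Sum.inr i) →
          ∃ a ∈ Sum.elim (fun u : {w : W // w ≠ w0} => liftSet v (φ u.1))
              (fun i : Fin 2 => if i = 0 then C0 else C1) (Sum.inl u),
            ∃ b ∈ Sum.elim (fun u : {w : W // w ≠ w0} => liftSet v (φ u.1))
              (fun i : Fin 2 => if i = 0 then C0 else C1) (Sum.inr i), G'.Adj a b := by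
        intro u i h
        rcases doSplit_adj_inl_inr.mp h with ⟨rfl, hu⟩ | ⟨rfl, hu⟩
        · simp only [hM1def, Set.mem_setOf_eq] at hu
          obtain ⟨-, x, hx, y, hy, hxy⟩ := hu
          refine ⟨x, hx, y, ?_, hxy⟩
          show y ∈ (if (0 : Fin 2) = 0 then C0 else C1)
          rw [if_pos rfl]
          exact hy
        · obtain ⟨x, hx, y, hy, hxy⟩ := hM2wit u.1 hu
          refine ⟨x, hx, y, ?_, hxy⟩
          show y ∈ (if (1 : Fin 2) = 0 then C0 else C1)
          rw [if_neg (by decide : ¬(1 : Fin 2) = 0)]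
          exact hy
      rintro (u | i) (u' | i') h
      · have huu' : H.Adj u.1 u'.1 := doSplit_adj_inl_inl.mp h
        obtain ⟨a, ha, b, hb, hab⟩ := hadj u.1 u'.1 huu'
        have hav : a ≠ v := fun h' => hvnot u.1 u.2 (h' ▸ ha)
        have hbv : b ≠ v := fun h' => hvnot u'.1 u'.2 (h' ▸ hb)
        exact ⟨Sum.inl ⟨a, hav⟩, ⟨_, ha, rfl⟩, Sum.inl ⟨b, hbv⟩, ⟨_, hb, rfl⟩,
          doSplit_adj_inl_inl.mpr hab⟩
      · exact main_inl_inr u i' h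
      · obtain ⟨a, ha, b, hb, hab⟩ := main_inl_inr u' i h.symm
        exact ⟨b, hb, a, ha, hab.symm⟩
      · exact absurd h doSplit_not_adj_inr

end Key

lemma exists_equiv_nat (w0 : ℕ) : Nonempty (({u : ℕ // u ≠ w0} ⊕ Fin 2) ≃ ℕ) := by
  have hinf : Infinite {u : ℕ // u ≠ w0} :=
    Infinite.of_injective (fun n : ℕ => (⟨n + w0 + 1, by omega⟩ : {u : ℕ // u ≠ w0}))
      (fun a b h => by simp only [Subtype.mk.injEq] at h; omega)
  have h2 : Infinite ({u : ℕ // u ≠ w0} ⊕ Fin 2) := infinite_sum.mpr (Or.inl hinf)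
  have h3 : Denumerable ({u : ℕ // u ≠ w0} ⊕ Fin 2) := Denumerable.ofEncodableOfInfinite _
  exact ⟨Denumerable.eqv _⟩

lemma splits_minor {G K : SimpleGraph ℕ} {j : ℕ} (hs : SplitsTo G j K) :
    ∀ L : SimpleGraph ℕ, GraphMinor L G →
      ∃ j' ≤ j, ∃ K' : SimpleGraph ℕ, GraphMinor K' K ∧ SplitsTo L j' K' := by
  induction hs with
  | refl G => exact fun L hm => ⟨0, le_rfl, L, hm, SplitsTo.refl L⟩
  | @step G Hm K k v N1 N2 hcov hiso htail ih =>
      intro L hm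
      obtain ⟨e⟩ := hiso
      rcases key G L v N1 N2 hcov hm with h | ⟨w0, M1, M2, hMcov, h⟩
      · obtain ⟨j', hj', K', hK', hsp⟩ := ih L (h.congr_right e.symm)
        exact ⟨j', hj'.trans (Nat.le_succ k), K', hK', hsp⟩
      · obtain ⟨en⟩ := exists_equiv_nat w0
        let Ls : SimpleGraph ℕ := SimpleGraph.comap en.symm (doSplit L w0 M1 M2)
        have eiso : Ls ≃g doSplit L w0 M1 M2 := ⟨en.symm, Iff.rfl⟩
        have hLs : GraphMinor Ls Hm := (h.congr_left eiso.symm).congr_right e.symm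
        obtain ⟨j', hj', K', hK', hsp⟩ := ih Ls hLs
        exact ⟨j' + 1, Nat.succ_le_succ hj', K', hK',
          SplitsTo.step w0 M1 M2 hMcov ⟨eiso⟩ hsp⟩



/-- For a minor-closed graph class `Cls` and `k ∈ ℕ`, the class `Cls_k` is
minor closed. -/
theorem stmt0 (Cls : Set (SimpleGraph ℕ)) (k : ℕ) (hCls : MinorClosed Cls) :
    MinorClosed (PiK Cls k) := by
  rintro G ⟨j, hj, K, hK, hs⟩ H hm
  obtain ⟨j', hj', K', hK', hsp⟩ := splits_minor hs H hm
  exact ⟨j', hj'.trans hj, K', hCls K hK K' hK', hsp⟩
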